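/- Let N = ℤe₁ + (1/3)ℤ(e₁ − e₂) ⊂ ℝ², e₀ = −e₁ − e₂, and let Δ be the one-dimensional fan with rays ρ_i = ℝ_{≥0} e_i for i ∈ {0,1,2}, with lattice N. Then Δ is unimodular with respect to N, and its degree-one Chow group A¹(Δ) = (⊕_i ℤ x_{ρ_i}) / ⟨Σ_i m(e_i) x_{ρ_i} : m ∈ N^*⟩ has nontrivial 3-torsion: the element x_{ρ₁} − x_{ρ₂} is nonzero in A¹(Δ) but 3(x_{ρ₁} − x_{ρ₂}) = 0. -/

import Mathlib

namespace TorsionExample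

/-- The standard basis vector `e₁` of `ℝ²`. -/
noncomputable def v₁ : Fin 2 → ℝ := ![1, 0]

/-- The vector `(1/3)(e₁ - e₂)` of `ℝ²`. -/
noncomputable def v₂ : Fin 2 → ℝ := ![1/3, -1/3]

/-- The lattice `N = ℤe₁ + (1/3)ℤ(e₁ - e₂) ⊂ ℝ²`. -/
noncomputable def N : Submodule ℤ (Fin 2 → ℝ) := Submodule.span ℤ {v₁, v₂}

lemma v₁_mem : v₁ ∈ N := Submodule.subset_span (by simp)

lemma v₂_mem : v₂ ∈ N := Submodule.subset_span (by simp)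

lemma e₂_mem : ![0, (1 : ℝ)] ∈ N := by
  have h : ![0, (1 : ℝ)] = v₁ + (-3 : ℤ) • v₂ := by
    funext i; fin_cases i <;> simp [v₁, v₂] <;> norm_num
  rw [h]; exact N.add_mem v₁_mem (N.smul_mem _ v₂_mem)

lemma e₀_mem : ![(-1 : ℝ), -1] ∈ N := by
  have h : ![(-1 : ℝ), -1] = (-2 : ℤ) • v₁ + (3 : ℤ) • v₂ := by
    funext i; fin_cases i <;> simp [v₁, v₂] <;> norm_num
  rw [h]; exact N.add_mem (N.smul_mem _ v₁_mem) (N.smul_mem _ v₂_mem)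

/-- The ray generators `e₀ = -e₁ - e₂`, `e₁`, `e₂`, as elements of `N`. -/
noncomputable def E : Fin 3 → ↥N
  | 0 => ⟨![-1, -1], e₀_mem⟩
  | 1 => ⟨![1, 0], v₁_mem⟩
  | 2 => ⟨![0, 1], e₂_mem⟩

/-- The relations `∑ᵢ m(eᵢ) x_{ρᵢ} = 0`, `m ∈ M = Hom(N, ℤ)`, defining `A¹(Δ)`
(for this one-dimensional fan, the ideal `I` is trivial in degree one). -/
noncomputable def Jrel : Submodule ℤ (Fin 3 → ℤ) :=
  Submodule.span ℤ {z | ∃ m : Module.Dual ℤ ↥N, z = fun i => m (E i)}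

/-- The degree-one Chow group `A¹(Δ) = (⊕ᵢ ℤ x_{ρᵢ}) / ⟨∑ᵢ m(eᵢ) x_{ρᵢ} : m ∈ N^*⟩`. -/
noncomputable abbrev A1 := (Fin 3 → ℤ) ⧸ Jrel


/-- Every element of `N` has the form `(a + b/3, -b/3)` with `a b : ℤ`. -/
lemma rep (w : Fin 2 → ℝ) (hw : w ∈ N) :
    ∃ a b : ℤ, w 0 = a + b / 3 ∧ w 1 = -b / 3 := by
  induction hw using Submodule.span_induction with
  | mem x hx =>
    simp only [Set.mem_insert_iff, Set.mem_singleton_iff] at hx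
    rcases hx with rfl | rfl
    · exact ⟨1, 0, by simp [v₁]⟩
    · exact ⟨0, 1, by constructor <;> simp [v₂] <;> norm_num⟩
  | zero => exact ⟨0, 0, by simp⟩
  | add x y hx hy ihx ihy =>
    obtain ⟨a, b, h0, h1⟩ := ihx
    obtain ⟨a', b', h0', h1'⟩ := ihy
    exact ⟨a + a', b + b', by push_cast; simp [h0, h0']; ring,
      by push_cast; simp [h1, h1']; ring⟩
  | smul c x hx ihx =>
    obtain ⟨a, b, h0, h1⟩ := ihx
    refine ⟨c * a, c * b, ?_, ?_⟩
    · have : (c • x) 0 = (c : ℝ) * x 0 := by simp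
      rw [this, h0]; push_cast; ring
    · have : (c • x) 1 = (c : ℝ) * x 1 := by simp
      rw [this, h1]; push_cast; ring

lemma key (w : ↥N) : ∃ k : ℤ, 3 * (w : Fin 2 → ℝ) 0 - 3 * (w : Fin 2 → ℝ) 1 = (k : ℝ) := by
  obtain ⟨a, b, h0, h1⟩ := rep w.1 w.2
  exact ⟨3 * a + 2 * b, by rw [h0, h1]; push_cast; ring⟩

/-- The dual functional with `m(v₁) = 3`, `m(v₂) = 2`, i.e. `(x,y) ↦ 3x - 3y`. -/
noncomputable def mdual : Module.Dual ℤ ↥N where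
  toFun w := ⌊3 * (w : Fin 2 → ℝ) 0 - 3 * (w : Fin 2 → ℝ) 1⌋
  map_add' w w' := by
    obtain ⟨k, hk⟩ := key w
    obtain ⟨l, hl⟩ := key w'
    have h : 3 * ((w + w' : ↥N) : Fin 2 → ℝ) 0 - 3 * ((w + w' : ↥N) : Fin 2 → ℝ) 1
        = ((k + l : ℤ) : ℝ) := by
      push_cast
      simp only [Submodule.coe_add, Pi.add_apply]
      linarith [hk, hl]
    rw [h, Int.floor_intCast, hk, hl, Int.floor_intCast, Int.floor_intCast]
  map_smul' c w := by
    obtain ⟨k, hk⟩ := key w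
    have h : 3 * ((c • w : ↥N) : Fin 2 → ℝ) 0 - 3 * ((c • w : ↥N) : Fin 2 → ℝ) 1
        = ((c * k : ℤ) : ℝ) := by
      simp only [Submodule.coe_smul, Pi.smul_apply, zsmul_eq_mul]
      push_cast
      linear_combination (c : ℝ) * hk
    rw [h, Int.floor_intCast, hk, Int.floor_intCast]
    simp

lemma mdual_E : ((3 : ℤ) • ((Pi.single 1 1 : Fin 3 → ℤ) - Pi.single 2 1)) = fun i => mdual (E i) := by
  funext i
  fin_cases i <;>
    simp [mdual, E, Pi.single_apply] <;> norm_num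

lemma sub_E : E 1 - E 2 = (3 : ℤ) • (⟨v₂, v₂_mem⟩ : ↥N) := by
  apply Subtype.ext
  funext i
  fin_cases i <;> simp [E, v₂] <;> norm_num

lemma mod3 (z : Fin 3 → ℤ) (hz : z ∈ Jrel) : ((z 1 - z 2 : ℤ) : ZMod 3) = 0 := by
  induction hz using Submodule.span_induction with
  | mem x hx =>
    obtain ⟨m, rfl⟩ := hx
    have h : m (E 1) - m (E 2) = 3 * m ⟨v₂, v₂_mem⟩ := by
      rw [← map_sub, sub_E, map_smul]; simp [mul_comm]
    rw [h]; push_cast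
    exact mul_eq_zero_of_left (by decide) _
  | zero => simp
  | add x y hx hy ihx ihy =>
    simp only [Pi.add_apply]; push_cast at ihx ihy ⊢; linear_combination ihx + ihy
  | smul c x hx ihx =>
    simp only [Pi.smul_apply, smul_eq_mul]; push_cast at ihx ⊢
    linear_combination (c : ZMod 3) * ihx

end TorsionExample

open TorsionExample

/-- the one-dimensional fan `Δ` in `ℝ²`, with rays `ρᵢ = ℝ_{≥0} eᵢ`
(`e₀ = -e₁ - e₂`) and lattice `N = ℤe₁ + (1/3)ℤ(e₁ - e₂)`, is unimodular with
respect to `N` (each `eᵢ` is primitive in `N`, the rays being distinct cones); and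
its degree-one Chow group `A¹(Δ)` has nontrivial `3`-torsion: `x_{ρ₁} - x_{ρ₂}`
is nonzero in `A¹(Δ)` while `3 (x_{ρ₁} - x_{ρ₂}) = 0`. -/
theorem chow_three_torsion :
    -- unimodularity: each ray generator is primitive in the lattice `N`
    (∀ (i : Fin 3) (m : ℤ) (w : ↥N), m • w = E i → IsUnit m) ∧
    -- the rays are distinct (so the degree-one part of the ideal `I` is trivial)
    (Function.Injective E) ∧
    Jrel.mkQ (Pi.single 1 1 - Pi.single 2 1) ≠ 0 ∧
    (3 : ℤ) • Jrel.mkQ (Pi.single 1 1 - Pi.single 2 1) = 0 := by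
  refine ⟨?_, ?_, ?_, ?_⟩
  · intro i m w hr
    obtain ⟨a, b, h0, h1⟩ := rep w.1 w.2
    have hv := congrArg Subtype.val hr
    have hv0 : (m : ℝ) * (w : Fin 2 → ℝ) 0 = ((E i : ↥N) : Fin 2 → ℝ) 0 := by
      have := congrFun hv 0; simpa using this
    have hv1 : (m : ℝ) * (w : Fin 2 → ℝ) 1 = ((E i : ↥N) : Fin 2 → ℝ) 1 := by
      have := congrFun hv 1; simpa using this
    rw [h0] at hv0
    rw [h1] at hv1
    fin_cases i
    · simp only [E, Matrix.cons_val_zero, Matrix.cons_val_one, Matrix.head_cons] at hv0 hv1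
      have ha : (m : ℝ) * ((a : ℝ) + (b : ℝ)) = 1 := by linear_combination hv0 - 2 * hv1
      have : m * (a + b) = 1 := by exact_mod_cast ha
      exact IsUnit.of_mul_eq_one _ this
    · simp only [E, Matrix.cons_val_zero, Matrix.cons_val_one, Matrix.head_cons] at hv0 hv1
      have ha : (m : ℝ) * (a : ℝ) = 1 := by linear_combination hv0 + hv1
      have : m * a = 1 := by exact_mod_cast ha
      exact IsUnit.of_mul_eq_one _ this
    · simp only [E, Matrix.cons_val_zero, Matrix.cons_val_one, Matrix.head_cons] at hv0 hv1
      have ha : (m : ℝ) * (a : ℝ) = 1 := by linear_combination hv0 + hv1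
      have : m * a = 1 := by exact_mod_cast ha
      exact IsUnit.of_mul_eq_one _ this
  · intro i j h
    have h0 := congrFun (congrArg Subtype.val h) 0
    fin_cases i <;> fin_cases j <;> first | rfl | (exfalso; norm_num [E] at h0)
  · intro hzero
    have hx : ((Pi.single 1 1 : Fin 3 → ℤ) - Pi.single 2 1) ∈ Jrel := by
      rwa [Submodule.mkQ_apply, Submodule.Quotient.mk_eq_zero] at hzero
    have h2 := mod3 _ hx
    simp [Pi.single_apply] at h2
    exact absurd h2 (by decide)
  · rw [← map_smul, Submodule.mkQ_apply, Submodule.Quotient.mk_eq_zero]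
    exact Submodule.subset_span ⟨mdual, mdual_E⟩
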